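/- arXiv:2404.15996 — 3 statements merged into one kernel-verified Lean document; each statement's English description precedes it below -/
import Mathlib

section
/- If M is an (ε, δ)-differentially private randomized mechanism with ε, δ < 1, and each agent's utility function maps outcomes to [0,1], then M is (ε, δ)-truthful: for every agent i, every true utility U_i, every misreport u'_i and every profile u_{-i} of other reports, E[U_i(M(u_i, u_{-i}))] ≥ (1−ε)·E[U_i(M(u'_i, u_{-i}))] − δ. -/
open MeasureTheory Real

/-- An (ε, δ)-differentially private mechanism with ε, δ < 1 is
(ε, δ)-truthful: for every agent i, true utility Uᵢ : Z → [0,1], misreport u'ᵢ and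
profile u₋ᵢ of other reports, E[Uᵢ(M(uᵢ, u₋ᵢ))] ≥ (1−ε)·E[Uᵢ(M(u'ᵢ, u₋ᵢ))] − δ. -/
theorem dp_implies_truthful
    {Z : Type*} [MeasurableSpace Z] {𝒰 : Type*} {n : ℕ}
    (M : (Fin n → 𝒰) → Measure Z)
    (hprob : ∀ u, IsProbabilityMeasure (M u))
    (ε δ : ℝ) (hε : 0 ≤ ε) (hε1 : ε < 1) (hδ : 0 ≤ δ) (hδ1 : δ < 1)
    (hDP : ∀ u u' : Fin n → 𝒰, (∃ i : Fin n, ∀ j : Fin n, j ≠ i → u j = u' j) →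
      ∀ O : Set Z, MeasurableSet O →
        M u O ≤ ENNReal.ofReal (Real.exp ε) * M u' O + ENNReal.ofReal δ)
    (i : Fin n) (Ui : Z → ℝ) (hUmeas : Measurable Ui)
    (hU01 : ∀ z, Ui z ∈ Set.Icc (0 : ℝ) 1)
    (u : Fin n → 𝒰) (u'i : 𝒰) :
    ∫ z, Ui z ∂(M u) ≥ (1 - ε) * ∫ z, Ui z ∂(M (Function.update u i u'i)) - δ := by
  set μ := M u with hμ
  set ν := M (Function.update u i u'i) with hν
  haveI : IsProbabilityMeasure μ := hprob u
  haveI : IsProbabilityMeasure ν := hprob _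
  set S : ℝ → Set Z := fun t => {z | t < Ui z} with hS
  have hSmeas : ∀ t, MeasurableSet (S t) := fun t =>
    measurableSet_lt measurable_const hUmeas
  set f : ℝ → ℝ := fun t => (μ (S t)).toReal with hf
  set g : ℝ → ℝ := fun t => (ν (S t)).toReal with hg
  have hSanti : ∀ ⦃s t : ℝ⦄, s ≤ t → S t ⊆ S s := by
    intro s t hst z hz; exact lt_of_le_of_lt hst hz
  have hfanti : Antitone f := fun s t hst =>
    ENNReal.toReal_mono (measure_ne_top μ _) (measure_mono (hSanti hst))
  have hganti : Antitone g := fun s t hst =>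
    ENNReal.toReal_mono (measure_ne_top ν _) (measure_mono (hSanti hst))
  have hf0 : ∀ t, 0 ≤ f t := fun t => ENNReal.toReal_nonneg
  have hg0 : ∀ t, 0 ≤ g t := fun t => ENNReal.toReal_nonneg
  have hf1 : ∀ t, f t ≤ 1 := fun t => by
    simpa using ENNReal.toReal_mono (by simp) (prob_le_one (μ := μ) (s := S t))
  have hg1 : ∀ t, g t ≤ 1 := fun t => by
    simpa using ENNReal.toReal_mono (by simp) (prob_le_one (μ := ν) (s := S t))
  have hSempty : ∀ t : ℝ, 1 ≤ t → S t = ∅ := by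
    intro t ht
    ext z; simp only [hS, Set.mem_setOf_eq, Set.mem_empty_iff_false, iff_false, not_lt]
    exact (hU01 z).2.trans ht
  have hfvanish : ∀ t ∈ Set.Ioi (1:ℝ), f t = 0 := by
    intro t ht; simp [hf, hSempty t (le_of_lt ht)]
  have hgvanish : ∀ t ∈ Set.Ioi (1:ℝ), g t = 0 := by
    intro t ht; simp [hg, hSempty t (le_of_lt ht)]
  -- integrability
  haveI : IsFiniteMeasure (volume.restrict (Set.Ioc (0:ℝ) 1)) := by
    constructor; simp [Real.volume_Ioc]
  have hInt : ∀ h : ℝ → ℝ, Antitone h → (∀ t, 0 ≤ h t) → (∀ t, h t ≤ 1) →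
      IntegrableOn h (Set.Ioc (0:ℝ) 1) := by
    intro h hanti h0 h1
    refine ⟨hanti.measurable.aestronglyMeasurable, ?_⟩
    apply HasFiniteIntegral.of_bounded (C := 1)
    filter_upwards with t
    rw [Real.norm_eq_abs, abs_of_nonneg (h0 t)]; exact h1 t
  have hfIntIoc := hInt f hfanti hf0 hf1
  have hgIntIoc := hInt g hganti hg0 hg1
  -- reduce Ioi 0 integrals to Ioc 0 1
  have hsplit : ∀ h : ℝ → ℝ, Antitone h → (∀ t ∈ Set.Ioi (1:ℝ), h t = 0) →
      IntegrableOn h (Set.Ioc (0:ℝ) 1) →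
      ∫ t in Set.Ioi (0:ℝ), h t = ∫ t in Set.Ioc (0:ℝ) 1, h t := by
    intro h hanti hvan hIoc
    have hdis : Disjoint (Set.Ioc (0:ℝ) 1) (Set.Ioi 1) := by
      rw [Set.disjoint_left]; intro a ha ha'; exact absurd ha.2 (not_le.mpr ha')
    have hIoi1 : IntegrableOn h (Set.Ioi (1:ℝ)) := by
      have : IntegrableOn (fun _ : ℝ => (0:ℝ)) (Set.Ioi (1:ℝ)) := integrableOn_zero
      exact this.congr_fun (fun t ht => (hvan t ht).symm) measurableSet_Ioi
    have := setIntegral_union hdis measurableSet_Ioi hIoc hIoi1 (f := h) (μ := volume)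
    rw [Set.Ioc_union_Ioi_eq_Ioi (by norm_num : (0:ℝ) ≤ 1)] at this
    rw [this, setIntegral_congr_fun measurableSet_Ioi hvan]
    simp
  -- layer cake
  have hUiInt : ∀ (m : Measure Z) [IsProbabilityMeasure m], Integrable Ui m := by
    intro m _
    refine ⟨hUmeas.aestronglyMeasurable, ?_⟩
    apply HasFiniteIntegral.of_bounded (C := 1)
    filter_upwards with z
    rw [Real.norm_eq_abs, abs_of_nonneg (hU01 z).1]; exact (hU01 z).2
  have hlayerμ : ∫ z, Ui z ∂μ = ∫ t in Set.Ioc (0:ℝ) 1, f t := by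
    rw [(hUiInt μ).integral_eq_integral_meas_lt (Filter.Eventually.of_forall fun z => (hU01 z).1)]
    exact hsplit f hfanti hfvanish hfIntIoc
  have hlayerν : ∫ z, Ui z ∂ν = ∫ t in Set.Ioc (0:ℝ) 1, g t := by
    rw [(hUiInt ν).integral_eq_integral_meas_lt (Filter.Eventually.of_forall fun z => (hU01 z).1)]
    exact hsplit g hganti hgvanish hgIntIoc
  -- pointwise DP bound
  have hpoint : ∀ t, (1 - ε) * g t - δ ≤ f t := by
    intro t
    have hdp := hDP (Function.update u i u'i) u
      ⟨i, fun j hj => Function.update_of_ne hj _ _⟩ (S t) (hSmeas t)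
    have hfin : ENNReal.ofReal (Real.exp ε) * μ (S t) ≠ ⊤ :=
      ENNReal.mul_ne_top ENNReal.ofReal_ne_top (measure_ne_top μ _)
    have hreal : g t ≤ Real.exp ε * f t + δ := by
      have := ENNReal.toReal_mono (by
        exact ENNReal.add_ne_top.mpr ⟨hfin, ENNReal.ofReal_ne_top⟩) hdp
      rw [ENNReal.toReal_add hfin ENNReal.ofReal_ne_top, ENNReal.toReal_mul,
        ENNReal.toReal_ofReal (le_of_lt (Real.exp_pos ε)),
        ENNReal.toReal_ofReal hδ] at this
      exact this
    have h1 : 1 - ε ≤ Real.exp (-ε) := by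
      have := Real.add_one_le_exp (-ε); linarith
    have h2 : Real.exp (-ε) ≤ 1 := Real.exp_le_one_iff.mpr (by linarith)
    have h3 : Real.exp ε * Real.exp (-ε) = 1 := by
      rw [← Real.exp_add]; simp
    nlinarith [hg0 t, hf0 t, Real.exp_pos ε, Real.exp_pos (-ε),
      mul_le_mul_of_nonneg_right hreal (le_of_lt (Real.exp_pos (-ε)))]
  -- integrate the pointwise bound
  have hmono : ∫ t in Set.Ioc (0:ℝ) 1, ((1 - ε) * g t - δ) ≤ ∫ t in Set.Ioc (0:ℝ) 1, f t := by
    apply setIntegral_mono_on _ hfIntIoc measurableSet_Ioc (fun t _ => hpoint t)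
    exact (hgIntIoc.const_mul (1 - ε)).sub ((integrableOn_const_iff).mpr (Or.inr (by simp [Real.volume_Ioc])))
  have hcalc : ∫ t in Set.Ioc (0:ℝ) 1, ((1 - ε) * g t - δ)
      = (1 - ε) * (∫ t in Set.Ioc (0:ℝ) 1, g t) - δ := by
    rw [integral_sub (hgIntIoc.const_mul (1 - ε))
      ((integrableOn_const_iff).mpr (Or.inr (by simp [Real.volume_Ioc]))),
      MeasureTheory.integral_const_mul, setIntegral_const]
    simp [Real.volume_Ioc]
  rw [ge_iff_le, hlayerμ, hlayerν, ← hcalc]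
  exact hmono
end

section
/- Let each U_i: Z → ℝ be differentiable, concave, and strictly positive on a convex set Z ⊆ ℝ^m. If z* maximizes ∑_i log(U_i(z)) over Z, then z* is a core outcome: there is no subset A of agents and z' ∈ Z such that (|A|/n)·U_i(z') ≥ U_i(z*) for all i ∈ A with at least one strict inequality. -/
open Real Finset

/-- If each Uᵢ is differentiable, concave, and strictly positive on a convex
set Z, and z* maximizes ∑ᵢ log(Uᵢ(z)) over Z, then z* is a core outcome: no subset A of
agents and z' ∈ Z satisfy (|A|/n)·Uᵢ(z') ≥ Uᵢ(z*) for all i ∈ A with one strict inequality. -/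
theorem mnw_is_core
    {m n : ℕ} (Z : Set (EuclideanSpace ℝ (Fin m))) (hZconv : Convex ℝ Z)
    (U : Fin n → EuclideanSpace ℝ (Fin m) → ℝ)
    (hdiff : ∀ i, DifferentiableOn ℝ (U i) Z)
    (hconc : ∀ i, ConcaveOn ℝ Z (U i))
    (hpos : ∀ i, ∀ z ∈ Z, 0 < U i z)
    (zstar : EuclideanSpace ℝ (Fin m)) (hzstar : zstar ∈ Z)
    (hmax : ∀ z ∈ Z, ∑ i, Real.log (U i z) ≤ ∑ i, Real.log (U i zstar)) :
    ¬ ∃ (A : Finset (Fin n)) (z' : EuclideanSpace ℝ (Fin m)), z' ∈ Z ∧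
        (∀ i ∈ A, ((A.card : ℝ) / n) * U i z' ≥ U i zstar) ∧
        (∃ i ∈ A, ((A.card : ℝ) / n) * U i z' > U i zstar) := by
  rintro ⟨A, z', hz', hge, i0, hi0, hstrict⟩
  set r : Fin n → ℝ := fun i => U i z' / U i zstar with hr
  have hU0 : ∀ i, 0 < U i zstar := fun i => hpos i zstar hzstar
  have hU' : ∀ i, 0 < U i z' := fun i => hpos i z' hz'
  have hrpos : ∀ i, 0 < r i := fun i => div_pos (hU' i) (hU0 i)
  -- Step 1: for t ∈ (0,1), ∑ log (1 + t*(r i - 1)) ≤ 0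
  have hlog : ∀ t ∈ Set.Ioo (0:ℝ) 1, ∑ i, Real.log (1 + t * (r i - 1)) ≤ 0 := by
    intro t ht
    obtain ⟨ht0, ht1⟩ := ht
    have ht1' : (0:ℝ) ≤ 1 - t := by linarith
    set zt := (1 - t) • zstar + t • z' with hzt
    have hztZ : zt ∈ Z := hZconv hzstar hz' ht1' ht0.le (by ring)
    have key : ∀ i, Real.log (U i zstar) + Real.log (1 + t * (r i - 1)) ≤ Real.log (U i zt) := by
      intro i
      have hcc := (hconc i).2 hzstar hz' ht1' ht0.le (by ring)
      have hrw : r i * U i zstar = U i z' := div_mul_cancel₀ _ (hU0 i).ne'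
      have heq : (1 - t) * U i zstar + t * U i z' = U i zstar * (1 + t * (r i - 1)) := by
        rw [hr]
        field_simp [(hU0 i).ne']
        ring
      have hd : 0 < 1 + t * (r i - 1) := by nlinarith [hrpos i]
      have hpos2 : 0 < (1 - t) * U i zstar + t * U i z' := by
        have := hU' i
        have h2 : 0 < t * U i z' := mul_pos ht0 this
        nlinarith [hU0 i]
      calc Real.log (U i zstar) + Real.log (1 + t * (r i - 1))
          = Real.log (U i zstar * (1 + t * (r i - 1))) :=
            (Real.log_mul (hU0 i).ne' hd.ne').symm
        _ = Real.log ((1 - t) * U i zstar + t * U i z') := by rw [heq]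
        _ ≤ Real.log (U i zt) := by
            apply Real.log_le_log hpos2
            simpa [smul_eq_mul] using hcc
    have := hmax zt hztZ
    have hsumkey : ∑ i, (Real.log (U i zstar) + Real.log (1 + t * (r i - 1)))
        ≤ ∑ i, Real.log (U i zt) := Finset.sum_le_sum fun i _ => key i
    rw [Finset.sum_add_distrib] at hsumkey
    linarith
  -- Step 2: positivity of 1 + t*(r i - 1) on (0,1)
  have hden : ∀ t ∈ Set.Ioo (0:ℝ) 1, ∀ i, 0 < 1 + t * (r i - 1) := by
    intro t ht i
    have := hrpos i
    nlinarith [ht.1, ht.2]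
  -- Step 3: f t := ∑ (r i - 1)/(1 + t (r i - 1)) ≤ 0 on (0,1)
  have hf : ∀ t ∈ Set.Ioo (0:ℝ) 1, ∑ i, (r i - 1) / (1 + t * (r i - 1)) ≤ 0 := by
    intro t ht
    have hmul : t * ∑ i, (r i - 1) / (1 + t * (r i - 1)) ≤ 0 := by
      rw [Finset.mul_sum]
      calc ∑ i, t * ((r i - 1) / (1 + t * (r i - 1)))
          ≤ ∑ i, Real.log (1 + t * (r i - 1)) := by
            apply Finset.sum_le_sum
            intro i _
            have hd := hden t ht i
            have hlg : Real.log (1 + t * (r i - 1)) ≥ 1 - (1 + t * (r i - 1))⁻¹ := by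
              have := Real.log_le_sub_one_of_pos (inv_pos.mpr hd)
              rw [Real.log_inv] at this
              linarith
            have : 1 - (1 + t * (r i - 1))⁻¹ = t * (r i - 1) / (1 + t * (r i - 1)) := by
              field_simp
              ring
            rw [this] at hlg
            calc t * ((r i - 1) / (1 + t * (r i - 1)))
                = t * (r i - 1) / (1 + t * (r i - 1)) := by ring
              _ ≤ Real.log (1 + t * (r i - 1)) := hlg
        _ ≤ 0 := hlog t ht
    nlinarith [ht.1]
  -- Step 4: take limit t → 0⁺ to get ∑ (r i - 1) ≤ 0
  have hlim : Filter.Tendsto (fun t => ∑ i, (r i - 1) / (1 + t * (r i - 1)))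
      (nhdsWithin 0 (Set.Ioi 0)) (nhds (∑ i, (r i - 1))) := by
    have : Filter.Tendsto (fun t => ∑ i, (r i - 1) / (1 + t * (r i - 1)))
        (nhds 0) (nhds (∑ i, (r i - 1))) := by
      have h : ∀ i : Fin n, Filter.Tendsto (fun t : ℝ => (r i - 1) / (1 + t * (r i - 1)))
          (nhds 0) (nhds (r i - 1)) := by
        intro i
        have : Filter.Tendsto (fun t : ℝ => (r i - 1) / (1 + t * (r i - 1)))
            (nhds 0) (nhds ((r i - 1) / (1 + 0 * (r i - 1)))) := by
          apply Filter.Tendsto.div tendsto_const_nhds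
          · exact (continuous_const.add (continuous_id.mul continuous_const)).tendsto 0
          · norm_num
        simpa using this
      exact tendsto_finset_sum Finset.univ (fun i _ => h i)
    exact this.mono_left nhdsWithin_le_nhds
  have hSle : ∑ i, (r i - 1) ≤ 0 := by
    apply le_of_tendsto hlim
    filter_upwards [Ioo_mem_nhdsGT_of_mem (by norm_num : (0:ℝ) ∈ Set.Ico 0 1)] with t ht
    exact hf t ht
  have hsum_r : ∑ i, r i ≤ n := by
    have : ∑ i, (r i - 1) = (∑ i, r i) - n := by
      rw [Finset.sum_sub_distrib]
      simp
    linarith [hSle, this ▸ hSle]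
  -- Step 5: contradiction from blocking coalition
  have hcard : 0 < A.card := Finset.card_pos.mpr ⟨i0, hi0⟩
  have hn : 0 < n := Fin.pos i0
  have hcardn : (0:ℝ) < (A.card : ℝ) / n := by positivity
  have hn' : (0:ℝ) < n := by exact_mod_cast hn
  have hcard' : (0:ℝ) < A.card := by exact_mod_cast hcard
  have hrA : ∀ i ∈ A, (n : ℝ) / A.card ≤ r i := by
    intro i hiA
    have h := hge i hiA
    have h2 : U i zstar * n ≤ (A.card : ℝ) * U i z' := by
      have := mul_le_mul_of_nonneg_right h hn'.le
      rw [div_mul_eq_mul_div, div_mul_eq_mul_div, mul_div_assoc,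
        div_self hn'.ne', mul_one] at this
      linarith
    rw [hr, div_le_div_iff₀ hcard' (hU0 i)]
    nlinarith
  have hrA0 : (n : ℝ) / A.card < r i0 := by
    have h2 : U i0 zstar * n < (A.card : ℝ) * U i0 z' := by
      have := mul_lt_mul_of_pos_right hstrict hn'
      rw [div_mul_eq_mul_div, div_mul_eq_mul_div, mul_div_assoc,
        div_self hn'.ne', mul_one] at this
      linarith
    rw [hr, div_lt_div_iff₀ hcard' (hU0 i0)]
    nlinarith
  have hsA : (n : ℝ) < ∑ i ∈ A, r i := by
    have h3 : ∑ _i ∈ A, (n : ℝ) / A.card < ∑ i ∈ A, r i :=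
      Finset.sum_lt_sum hrA ⟨i0, hi0, hrA0⟩
    rw [Finset.sum_const, nsmul_eq_mul, mul_div_cancel₀ _ hcard'.ne'] at h3
    exact h3
  have hsub : ∑ i ∈ A, r i ≤ ∑ i, r i := by
    apply Finset.sum_le_sum_of_subset_of_nonneg (Finset.subset_univ A)
    intro i _ _
    exact (hrpos i).le
  linarith
end

section
/- Let ε, δ ≥ 0 and z ∈ Z. If for every z' ∈ Z we have (1/n)·∑_{i=1}^n U_i(z')/(U_i(z) + δ/(1+ε)) ≤ 1 + ε, then z is an (ε, δ)-core outcome: there exists no set A ⊆ {1,...,n} and no z' ∈ Z such that (|A|/n)·U_i(z') ≥ (1+ε)·U_i(z) + δ for all i ∈ A with at least one strict inequality. -/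
open Finset

/-- If (1/n)·∑ᵢ Uᵢ(z')/(Uᵢ(z) + δ/(1+ε)) ≤ 1 + ε for all z' ∈ Z,
then z is an (ε, δ)-core outcome. -/
theorem mnw_approx_core
    {Z : Type*} {n : ℕ} (U : Fin n → Z → ℝ) (hU : ∀ i z, 0 ≤ U i z)
    (ε δ : ℝ) (hε : 0 ≤ ε) (hδ : 0 ≤ δ)
    (F : Set Z) (z : Z) (hz : z ∈ F)
    (hden : ∀ i, 0 < U i z + δ / (1 + ε))
    (h : ∀ z' ∈ F, (1 / (n : ℝ)) * ∑ i, U i z' / (U i z + δ / (1 + ε)) ≤ 1 + ε) :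
    ¬ ∃ (A : Finset (Fin n)) (z' : Z), z' ∈ F ∧
        (∀ i ∈ A, ((A.card : ℝ) / n) * U i z' ≥ (1 + ε) * U i z + δ) ∧
        (∃ i ∈ A, ((A.card : ℝ) / n) * U i z' > (1 + ε) * U i z + δ) := by
  rintro ⟨A, z', hz', hall, i₀, hi₀, hstrict⟩
  have hn : 0 < (n : ℝ) := by exact_mod_cast i₀.pos
  have hA : 0 < (A.card : ℝ) := by
    exact_mod_cast Finset.card_pos.mpr ⟨i₀, hi₀⟩
  have h1ε : (0:ℝ) < 1 + ε := by linarith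
  have hd : ∀ i, (1 + ε) * (U i z + δ / (1 + ε)) = (1 + ε) * U i z + δ := by
    intro i; field_simp
  have key : ∀ i ∈ A, (1 + ε) * n / A.card ≤ U i z' / (U i z + δ / (1 + ε)) := by
    intro i hi
    rw [div_le_div_iff₀ hA (hden i)]
    have := hall i hi
    have h2 : (1 + ε) * (U i z + δ / (1 + ε)) ≤ (A.card / n) * U i z' := by
      rw [hd i]; linarith
    have h3 : ((A.card : ℝ) / n) * U i z' * n ≤ U i z' * A.card := by
      rw [div_mul_eq_mul_div, div_mul_eq_mul_div, div_le_iff₀ hn]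
      ring_nf; nlinarith [hU i z']
    nlinarith
  have keystrict : (1 + ε) * n / A.card < U i₀ z' / (U i₀ z + δ / (1 + ε)) := by
    rw [div_lt_div_iff₀ hA (hden i₀)]
    have h2 : (1 + ε) * (U i₀ z + δ / (1 + ε)) < (A.card / n) * U i₀ z' := by
      rw [hd i₀]; linarith
    have h3 : ((A.card : ℝ) / n) * U i₀ z' * n ≤ U i₀ z' * A.card := by
      rw [div_mul_eq_mul_div, div_mul_eq_mul_div, div_le_iff₀ hn]
      ring_nf; nlinarith [hU i₀ z']
    nlinarith
  have hsumA : (1 + ε) * n < ∑ i ∈ A, U i z' / (U i z + δ / (1 + ε)) := by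
    have := Finset.sum_lt_sum key ⟨i₀, hi₀, keystrict⟩
    have hc : ∑ _i ∈ A, (1 + ε) * n / A.card = (1 + ε) * n := by
      rw [Finset.sum_const, nsmul_eq_mul]
      field_simp
    linarith [hc ▸ this]
  have hsub : ∑ i ∈ A, U i z' / (U i z + δ / (1 + ε))
      ≤ ∑ i, U i z' / (U i z + δ / (1 + ε)) := by
    apply Finset.sum_le_sum_of_subset_of_nonneg (Finset.subset_univ A)
    intro i _ _
    exact div_nonneg (hU i z') (hden i).le
  have hfin := h z' hz'
  rw [one_div, inv_mul_le_iff₀ hn] at hfin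
  nlinarith
end
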